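/- arXiv:1909.03190 — 3 statements merged into one kernel-verified Lean document; each statement's English description precedes it below -/
import Mathlib

section
/- (Reduction of the radial singular Yamabe equation to a Newton ODE.) Let n ≥ 3, κ > 0, let v : ℝ → (0, ∞) be twice differentiable, and define u : ℝⁿ \ {0} → ℝ by u(x) = |x|^((2−n)/2) v(log |x|). Then u satisfies −Δu = κ u^((n+2)/(n−2)) on ℝⁿ \ {0} if and only if v satisfies −v''(t) = κ v(t)^((n+2)/(n−2)) − ((n−2)/2)² v(t) for all t ∈ ℝ. -/
open Real

/-- The Euclidean Laplacian: the sum of the second partial derivatives. -/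
noncomputable def lap {n : ℕ} (u : EuclideanSpace ℝ (Fin n) → ℝ)
    (x : EuclideanSpace ℝ (Fin n)) : ℝ :=
  ∑ i : Fin n, fderiv ℝ (fun y => fderiv ℝ u y (EuclideanSpace.single i 1)) x
    (EuclideanSpace.single i 1)

private lemma hw_deriv (α : ℝ) (g g' : ℝ → ℝ) (hg : ∀ t, HasDerivAt g (g' t) t) (t : ℝ) :
    HasDerivAt (fun t => Real.exp (α * t) * g t)
      (Real.exp (α * t) * (α * g t + g' t)) t := by
  have he : HasDerivAt (fun t => Real.exp (α * t)) (Real.exp (α * t) * α) t := by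
    have h0 : HasDerivAt (fun y : ℝ => α * y) (α * 1) t := (hasDerivAt_id t).const_mul α
    simpa [Function.comp_def] using (Real.hasDerivAt_exp (α * t)).comp t h0
  have : HasDerivAt (fun t => Real.exp (α * t) * g t)
      (Real.exp (α * t) * α * g t + Real.exp (α * t) * g' t) t := he.fun_mul (hg t)
  convert this using 1
  ring

private lemma d1 (g g' : ℝ → ℝ) (hg : ∀ t, HasDerivAt g (g' t) t) {s : ℝ} (hs : 0 < s) :
    HasDerivAt (fun s => g (Real.log s / 2)) (g' (Real.log s / 2) * (s⁻¹ / 2)) s := by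
  have hL : HasDerivAt (fun s : ℝ => Real.log s / 2) (s⁻¹ / 2) s :=
    (Real.hasDerivAt_log hs.ne').div_const 2
  exact (hg _).comp s hL

private lemma d2 (g g' : ℝ → ℝ) (hg : ∀ t, HasDerivAt g (g' t) t) {s : ℝ} (hs : 0 < s) :
    HasDerivAt (fun s => g (Real.log s / 2) * (s⁻¹ / 2))
      (g' (Real.log s / 2) * (s⁻¹ / 2) * (s⁻¹ / 2) + g (Real.log s / 2) * (-(s ^ 2)⁻¹ / 2)) s := by
  have h1 := d1 g g' hg hs
  have h2 : HasDerivAt (fun s : ℝ => s⁻¹ / 2) (-(s ^ 2)⁻¹ / 2) s :=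
    (hasDerivAt_inv hs.ne').div_const 2
  exact h1.mul h2


private lemma lap_congr {n : ℕ} (u1 u2 : EuclideanSpace ℝ (Fin n) → ℝ)
    {x : EuclideanSpace ℝ (Fin n)} (h : ∀ᶠ y in nhds x, u1 y = u2 y) :
    lap u1 x = lap u2 x := by
  unfold lap
  refine Finset.sum_congr rfl fun i _ => ?_
  have h2 : ∀ᶠ y in nhds x, fderiv ℝ u1 y = fderiv ℝ u2 y :=
    h.eventually_nhds.mono fun y hy => Filter.EventuallyEq.fderiv_eq hy
  have h3 : (fun y => fderiv ℝ u1 y (EuclideanSpace.single i 1))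
      =ᶠ[nhds x] (fun y => fderiv ℝ u2 y (EuclideanSpace.single i 1)) :=
    h2.mono fun y hy => by simp only [hy]
  rw [h3.fderiv_eq]

private lemma lap_comp (n : ℕ) (g g1 g2 : ℝ → ℝ)
    (hg : ∀ t, HasDerivAt g (g1 t) t) (hg1 : ∀ t, HasDerivAt g1 (g2 t) t)
    (x : EuclideanSpace ℝ (Fin n)) (hx : x ≠ 0) :
    lap (fun y => g (Real.log (‖y‖ ^ 2) / 2)) x
      = (g2 (Real.log ‖x‖) + ((n : ℝ) - 2) * g1 (Real.log ‖x‖)) / ‖x‖ ^ 2 := by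
  have hq : ∀ y : EuclideanSpace ℝ (Fin n),
      HasFDerivAt (fun y : EuclideanSpace ℝ (Fin n) => ‖y‖ ^ 2) (2 • innerSL ℝ y) y :=
    fun y => (hasStrictFDerivAt_norm_sq y).hasFDerivAt
  have hs : ∀ y : EuclideanSpace ℝ (Fin n), y ≠ 0 → 0 < ‖y‖ ^ 2 :=
    fun y hy => pow_pos (norm_pos_iff.mpr hy) 2
  have hu : ∀ y : EuclideanSpace ℝ (Fin n), y ≠ 0 →
      HasFDerivAt (fun y : EuclideanSpace ℝ (Fin n) => g (Real.log (‖y‖ ^ 2) / 2))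
        ((g1 (Real.log (‖y‖ ^ 2) / 2) * ((‖y‖ ^ 2)⁻¹ / 2)) • (2 • innerSL ℝ y)) y :=
    fun y hy => (d1 g g1 hg (hs y hy)).comp_hasFDerivAt (h₂ := fun s => g (Real.log s / 2)) y (hq y)
  have hev : ∀ i : Fin n,
      (fun y => fderiv ℝ (fun y : EuclideanSpace ℝ (Fin n) => g (Real.log (‖y‖ ^ 2) / 2)) y
          (EuclideanSpace.single i 1))
        =ᶠ[nhds x]
      (fun y => (g1 (Real.log (‖y‖ ^ 2) / 2) * ((‖y‖ ^ 2)⁻¹ / 2)) * (2 * y i)) := by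
    intro i
    filter_upwards [isOpen_compl_singleton.mem_nhds hx] with y hy
    rw [(hu y (by simpa using hy)).fderiv]
    simp [EuclideanSpace.inner_single_right, real_inner_comm]
  have hA : HasFDerivAt
      (fun y : EuclideanSpace ℝ (Fin n) => g1 (Real.log (‖y‖ ^ 2) / 2) * ((‖y‖ ^ 2)⁻¹ / 2))
      ((g2 (Real.log (‖x‖ ^ 2) / 2) * ((‖x‖ ^ 2)⁻¹ / 2) * ((‖x‖ ^ 2)⁻¹ / 2)
        + g1 (Real.log (‖x‖ ^ 2) / 2) * (-((‖x‖ ^ 2) ^ 2)⁻¹ / 2)) • (2 • innerSL ℝ x)) x :=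
    (d2 g1 g2 hg1 (hs x hx)).comp_hasFDerivAt (h₂ := fun s => g1 (Real.log s / 2) * (s⁻¹ / 2)) x (hq x)
  have key : ∀ i : Fin n,
      fderiv ℝ (fun y => fderiv ℝ
          (fun y : EuclideanSpace ℝ (Fin n) => g (Real.log (‖y‖ ^ 2) / 2)) y
          (EuclideanSpace.single i 1)) x (EuclideanSpace.single i 1)
        = 2 * (g1 (Real.log (‖x‖ ^ 2) / 2) * ((‖x‖ ^ 2)⁻¹ / 2))
          + 4 * (g2 (Real.log (‖x‖ ^ 2) / 2) * ((‖x‖ ^ 2)⁻¹ / 2) * ((‖x‖ ^ 2)⁻¹ / 2)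
              + g1 (Real.log (‖x‖ ^ 2) / 2) * (-((‖x‖ ^ 2) ^ 2)⁻¹ / 2)) * (x i) ^ 2 := by
    intro i
    rw [(hev i).fderiv_eq]
    have hB : HasFDerivAt (fun y : EuclideanSpace ℝ (Fin n) => (2 : ℝ) * y i)
        ((2 : ℝ) • (EuclideanSpace.proj (𝕜 := ℝ) i)) x :=
      (EuclideanSpace.proj (𝕜 := ℝ) i).hasFDerivAt.const_mul 2
    have h := hA.fun_mul hB
    rw [h.fderiv]
    simp [EuclideanSpace.inner_single_right, real_inner_comm, EuclideanSpace.single_apply]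
    ring
  unfold lap
  rw [Finset.sum_congr rfl fun i _ => key i]
  have hsum : ∑ i : Fin n, (x i) ^ 2 = ‖x‖ ^ 2 := by
    rw [EuclideanSpace.norm_eq, Real.sq_sqrt (by positivity)]
    simp [sq_abs]
  rw [Finset.sum_add_distrib, Finset.sum_const, Finset.card_univ, Fintype.card_fin,
    ← Finset.mul_sum, hsum]
  have hlog : Real.log (‖x‖ ^ 2) / 2 = Real.log ‖x‖ := by
    rw [Real.log_pow]; push_cast; ring
  have hs0 : (‖x‖ : ℝ) ^ 2 ≠ 0 := (hs x hx).ne'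
  rw [hlog]
  have hxn : ‖x‖ ≠ 0 := norm_ne_zero_iff.mpr hx
  field_simp
  have h2 : ‖x‖ ^ 2 * ‖x‖⁻¹ ^ 2 = 1 := by field_simp
  linear_combination (g1 (Real.log ‖x‖) * n * 4) * h2

private lemma lap_radial (n : ℕ) (v v' v'' : ℝ → ℝ)
    (hv' : ∀ t, HasDerivAt v (v' t) t) (hv'' : ∀ t, HasDerivAt v' (v'' t) t)
    (x : EuclideanSpace ℝ (Fin n)) (hx : x ≠ 0) :
    lap (fun y => ‖y‖ ^ (((2 : ℝ) - (n : ℝ)) / 2) * v (Real.log ‖y‖)) x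
      = ‖x‖ ^ (((2 : ℝ) - (n : ℝ)) / 2 - 2)
        * (v'' (Real.log ‖x‖) - (((2 : ℝ) - (n : ℝ)) / 2) ^ 2 * v (Real.log ‖x‖)) := by
  set α : ℝ := ((2 : ℝ) - (n : ℝ)) / 2 with hα
  have hg : ∀ t, HasDerivAt (fun t => Real.exp (α * t) * v t)
      (Real.exp (α * t) * (α * v t + v' t)) t := hw_deriv α v v' hv'
  have hg1 : ∀ t, HasDerivAt (fun t => Real.exp (α * t) * (α * v t + v' t))
      (Real.exp (α * t) * (α * (α * v t + v' t) + (α * v' t + v'' t))) t :=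
    hw_deriv α _ _ (fun t => ((hv' t).const_mul α).add (hv'' t))
  have hcong : lap (fun y => ‖y‖ ^ α * v (Real.log ‖y‖)) x
      = lap (fun y : EuclideanSpace ℝ (Fin n) =>
          (fun t => Real.exp (α * t) * v t) (Real.log (‖y‖ ^ 2) / 2)) x := by
    apply lap_congr
    filter_upwards [isOpen_compl_singleton.mem_nhds hx] with y hy
    have hy0 : y ≠ 0 := by simpa using hy
    have hr : 0 < ‖y‖ := norm_pos_iff.mpr hy0
    have hlog : Real.log (‖y‖ ^ 2) / 2 = Real.log ‖y‖ := by
      rw [Real.log_pow]; push_cast; ring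
    simp only [hlog]
    rw [Real.rpow_def_of_pos hr, mul_comm (Real.log ‖y‖) α]
  rw [hcong, lap_comp n _ _ _ hg hg1 x hx]
  have hr : 0 < ‖x‖ := norm_pos_iff.mpr hx
  have hrx : ‖x‖ = Real.exp (Real.log ‖x‖) := (Real.exp_log hr).symm
  have hpow : ‖x‖ ^ (α - 2) = Real.exp (α * Real.log ‖x‖) / (‖x‖ * ‖x‖) := by
    rw [Real.rpow_def_of_pos hr, show Real.log ‖x‖ * (α - 2)
        = α * Real.log ‖x‖ - (Real.log ‖x‖ + Real.log ‖x‖) by ring,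
      Real.exp_sub, Real.exp_add, ← hrx]
  rw [hpow]
  have hne : (‖x‖ : ℝ) ≠ 0 := hr.ne'
  rw [hα]
  field_simp
  ring

private lemma pt_iff (n : ℕ) (hn : 3 ≤ n) (κ : ℝ) (vt v''t : ℝ) (hvt : 0 < vt)
    (r : ℝ) (hr : 0 < r) :
    (-(r ^ (((2 : ℝ) - (n : ℝ)) / 2 - 2)
          * (v''t - (((2 : ℝ) - (n : ℝ)) / 2) ^ 2 * vt))
        = κ * (r ^ (((2 : ℝ) - (n : ℝ)) / 2) * vt) ^ (((n : ℝ) + 2) / ((n : ℝ) - 2)))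
      ↔ (-v''t = κ * vt ^ (((n : ℝ) + 2) / ((n : ℝ) - 2))
          - (((n : ℝ) - 2) / 2) ^ 2 * vt) := by
  have hn2 : ((n : ℝ) - 2) ≠ 0 := by
    have : (3 : ℝ) ≤ (n : ℝ) := by exact_mod_cast hn
    linarith
  have hmul : (r ^ (((2 : ℝ) - (n : ℝ)) / 2) * vt) ^ (((n : ℝ) + 2) / ((n : ℝ) - 2))
      = r ^ (((2 : ℝ) - (n : ℝ)) / 2 - 2) * vt ^ (((n : ℝ) + 2) / ((n : ℝ) - 2)) := by
    rw [Real.mul_rpow (Real.rpow_nonneg hr.le _) hvt.le, ← Real.rpow_mul hr.le]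
    congr 2
    field_simp
    ring
  rw [hmul]
  have hrp : (0 : ℝ) < r ^ (((2 : ℝ) - (n : ℝ)) / 2 - 2) := Real.rpow_pos_of_pos hr _
  set C := r ^ (((2 : ℝ) - (n : ℝ)) / 2 - 2) with hC
  set Y := vt ^ (((n : ℝ) + 2) / ((n : ℝ) - 2)) with hY
  constructor <;> intro h
  · have h2 : C * (-(v''t - (((2 : ℝ) - (n : ℝ)) / 2) ^ 2 * vt)) = C * (κ * Y) := by
      linear_combination h
    have h3 := mul_left_cancel₀ hrp.ne' h2
    linear_combination h3
  · linear_combination C * h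

/-- Reduction of the radial singular Yamabe equation to a Newton ODE:
`u(x) = |x|^((2-n)/2) v(log |x|)` solves `-Δu = κ u^((n+2)/(n-2))` on `ℝⁿ \ {0}`
iff `v` solves `-v'' = κ v^((n+2)/(n-2)) - ((n-2)/2)² v` on `ℝ`. -/
theorem stmt_5 (n : ℕ) (hn : 3 ≤ n) (κ : ℝ) (hκ : 0 < κ)
    (v v' v'' : ℝ → ℝ) (hvpos : ∀ t, 0 < v t)
    (hv' : ∀ t, HasDerivAt v (v' t) t) (hv'' : ∀ t, HasDerivAt v' (v'' t) t) :
    (∀ x : EuclideanSpace ℝ (Fin n), x ≠ 0 →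
        -lap (fun y => ‖y‖ ^ (((2 : ℝ) - (n : ℝ)) / 2) * v (Real.log ‖y‖)) x
          = κ * (‖x‖ ^ (((2 : ℝ) - (n : ℝ)) / 2) * v (Real.log ‖x‖))
              ^ (((n : ℝ) + 2) / ((n : ℝ) - 2)))
      ↔ (∀ t : ℝ,
          -v'' t = κ * v t ^ (((n : ℝ) + 2) / ((n : ℝ) - 2))
            - (((n : ℝ) - 2) / 2) ^ 2 * v t) := by
  constructor
  · intro h t
    have hpos : (0 : ℝ) < Real.exp t := Real.exp_pos t
    set x : EuclideanSpace ℝ (Fin n) :=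
      EuclideanSpace.single (⟨0, by omega⟩ : Fin n) (Real.exp t) with hxdef
    have hxn : ‖x‖ = Real.exp t := by
      rw [hxdef, EuclideanSpace.norm_single, Real.norm_eq_abs, Real.abs_exp]
    have hx0 : x ≠ 0 := by
      intro h0
      rw [h0, norm_zero] at hxn
      exact (Real.exp_pos t).ne' hxn.symm
    have h1 := h x hx0
    rw [lap_radial n v v' v'' hv' hv'' x hx0, hxn, Real.log_exp] at h1
    exact (pt_iff n hn κ (v t) (v'' t) (hvpos t) (Real.exp t) hpos).mp h1
  · intro h x hx
    have hr : 0 < ‖x‖ := norm_pos_iff.mpr hx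
    rw [lap_radial n v v' v'' hv' hv'' x hx]
    exact (pt_iff n hn κ (v (Real.log ‖x‖)) (v'' (Real.log ‖x‖)) (hvpos _) ‖x‖ hr).mpr
      (h (Real.log ‖x‖))
end

section
/- (Pointwise radial boundary identity.) Let n ≥ 3, κ ∈ ℝ, let v : ℝ → (0, ∞) be differentiable, and define u(r) = r^((2−n)/2) v(log r) for r > 0. Then for every r > 0: (1/2) r u'(r)² + κ ((n−2)/(2n)) r u(r)^(2n/(n−2)) + ((n−2)/2) u(r) u'(r) = r^(1−n) [ (1/2) v'(log r)² + κ ((n−2)/(2n)) v(log r)^(2n/(n−2)) − (1/2) ((n−2)/2)² v(log r)² ]. -/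
/-- Pointwise radial boundary identity: for `u(r) = r^((2-n)/2) v(log r)`, the radial
Pohozaev boundary integrand equals `r^(1-n)` times the Hamiltonian energy of `v`. -/
theorem stmt_8 (n : ℕ) (hn : 3 ≤ n) (κ : ℝ)
    (v v' : ℝ → ℝ) (hvpos : ∀ t, 0 < v t) (hv' : ∀ t, HasDerivAt v (v' t) t)
    (u : ℝ → ℝ) (hu : ∀ r : ℝ, u r = r ^ (((2 : ℝ) - (n : ℝ)) / 2) * v (Real.log r)) :
    ∀ r : ℝ, 0 < r →
      (1 / 2) * r * (deriv u r) ^ 2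
          + κ * (((n : ℝ) - 2) / (2 * (n : ℝ))) * r * u r ^ (2 * (n : ℝ) / ((n : ℝ) - 2))
          + (((n : ℝ) - 2) / 2) * u r * deriv u r
        = r ^ ((1 : ℝ) - (n : ℝ)) *
            ((1 / 2) * (v' (Real.log r)) ^ 2
              + κ * (((n : ℝ) - 2) / (2 * (n : ℝ)))
                  * v (Real.log r) ^ (2 * (n : ℝ) / ((n : ℝ) - 2))
              - (1 / 2) * (((n : ℝ) - 2) / 2) ^ 2 * (v (Real.log r)) ^ 2) := by
  intro r hr
  have hn3 : (3 : ℝ) ≤ (n : ℝ) := by exact_mod_cast hn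
  have hn2 : (n : ℝ) - 2 ≠ 0 := by linarith
  have hrne : r ≠ 0 := hr.ne'
  set α : ℝ := ((2 : ℝ) - (n : ℝ)) / 2 with hα
  set t : ℝ := Real.log r with ht
  set A : ℝ := v t with hA
  set B : ℝ := v' t with hB
  -- derivative of u
  have hD : HasDerivAt u (α * r ^ (α - 1) * A + r ^ α * (B * r⁻¹)) r := by
    have h1 : HasDerivAt (fun x : ℝ => x ^ α) (α * r ^ (α - 1)) r :=
      Real.hasDerivAt_rpow_const (Or.inl hrne)
    have h2 : HasDerivAt (fun x : ℝ => v (Real.log x)) (B * r⁻¹) r :=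
      (hv' t).comp r (Real.hasDerivAt_log hrne)
    have hu' : u = fun x : ℝ => x ^ α * v (Real.log x) := funext hu
    rw [hu']
    exact h1.mul h2
  have hder : deriv u r = (α * A + B) * (r ^ α / r) := by
    rw [hD.deriv]
    have h1 : r ^ (α - 1) = r ^ α / r := by
      rw [Real.rpow_sub hr, Real.rpow_one]
    rw [h1]; field_simp
  set Q : ℝ := r ^ (-(n : ℝ)) with hQ
  have hPP : r ^ α * r ^ α = Q * (r * r) := by
    rw [hQ, ← Real.rpow_add hr]
    have h2 : α + α = -(n : ℝ) + (1 + 1) := by rw [hα]; ring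
    rw [h2, Real.rpow_add hr, Real.rpow_add hr, Real.rpow_one]
  have hR : r ^ ((1 : ℝ) - (n : ℝ)) = Q * r := by
    rw [hQ, show (1 : ℝ) - (n : ℝ) = -(n : ℝ) + 1 by ring, Real.rpow_add hr,
      Real.rpow_one]
  have hαp : α * (2 * (n : ℝ) / ((n : ℝ) - 2)) = -(n : ℝ) := by
    rw [hα]; field_simp; ring
  have hup : u r ^ (2 * (n : ℝ) / ((n : ℝ) - 2)) = Q * A ^ (2 * (n : ℝ) / ((n : ℝ) - 2)) := by
    rw [hu r, Real.mul_rpow (Real.rpow_nonneg hr.le _) (hvpos t).le,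
      ← Real.rpow_mul hr.le, hαp, hQ]
  rw [hder, hup, hu r, hR]
  have key : r ^ α * r ^ α = Q * (r * r) := hPP
  field_simp
  linear_combination (r * (n:ℝ) * A ^ 2 * (-1 / 2) + r * (n:ℝ) ^ 2 * A ^ 2 * (1 / 8)
    + r * A ^ 2 * (1 / 2) + r * B ^ 2 * (-1 / 2) - r ^ 2 * (n:ℝ) ^ 2 * A ^ 2 * 128
    + r ^ 2 * (n:ℝ) ^ 2 * B ^ 2 * 128 + r ^ 2 * (n:ℝ) ^ 3 * A ^ 2 * 128
    - r ^ 2 * (n:ℝ) ^ 4 * A ^ 2 * 32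
    + r * (n:ℝ) * A ^ 2 * (1 / 2) + r * (n:ℝ) ^ 2 * A ^ 2 * (-1 / 8)
    + r * A ^ 2 * (-1 / 2) + r * B ^ 2 * (1 / 2)
    + (-4 * (n:ℝ) * A ^ 2 + 4 * (n:ℝ) * B ^ 2 + 4 * (n:ℝ) ^ 2 * A ^ 2 + 128 * (n:ℝ) ^ 2 * A ^ 2 * r ^ 2
      - 128 * (n:ℝ) ^ 2 * B ^ 2 * r ^ 2 - (n:ℝ) ^ 3 * A ^ 2 - 128 * (n:ℝ) ^ 3 * A ^ 2 * r ^ 2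
      + 32 * (n:ℝ) ^ 4 * A ^ 2 * r ^ 2)) * key
end

section
/- (Conservation law for Fowler solutions.) Let n ≥ 3, κ > 0, and let v : ℝ → (0, ∞) be twice differentiable satisfying −v''(t) = κ v(t)^((n+2)/(n−2)) − ((n−2)/2)² v(t) for all t, with Hamiltonian H = (1/2) v'(0)² + κ ((n−2)/(2n)) v(0)^(2n/(n−2)) − (1/2)((n−2)/2)² v(0)². Define u_H : ℝⁿ \ {0} → ℝ by u_H(x) = |x|^((2−n)/2) v(log |x|). Then for every r > 0: (1/2^*) ∮_{∂B_r} ⟨x, ν⟩ κ u_H^(2^*) dσ + ∮_{∂B_r} B(r, x, u_H, ∇u_H) dσ = ω_n H, where ω_n is the (n−1)-dimensional Hausdorff measure of the unit sphere S^(n−1) ⊆ ℝⁿ. -/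
open MeasureTheory Metric
open scoped Pointwise
open scoped RealInnerProductSpace

lemma aux_norm_fderiv {E : Type*} [NormedAddCommGroup E] [InnerProductSpace ℝ E]
    {x : E} (hx : x ≠ 0) :
    HasFDerivAt (fun y : E => ‖y‖) (‖x‖⁻¹ • innerSL ℝ x) x := by
  have hnx : ‖x‖ ≠ 0 := norm_ne_zero_iff.mpr hx
  have h2 : HasFDerivAt (fun y : E => ‖y‖ ^ 2) (2 • innerSL ℝ x) x := by
    simpa using (hasFDerivAt_id x).norm_sq
  have hs : HasDerivAt Real.sqrt (1 / (2 * Real.sqrt (‖x‖ ^ 2))) (‖x‖ ^ 2) :=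
    Real.hasDerivAt_sqrt (by positivity)
  have h3 := hs.comp_hasFDerivAt x h2
  have heq : (Real.sqrt ∘ fun y : E => ‖y‖ ^ 2) = fun y : E => ‖y‖ :=
    funext fun y => Real.sqrt_sq (norm_nonneg y)
  rw [heq] at h3
  refine h3.congr_fderiv (Eq.symm ?_)
  rw [Real.sqrt_sq (norm_nonneg x)]
  ext y
  simp only [ContinuousLinearMap.smul_apply, innerSL_apply_apply, smul_eq_mul, nsmul_eq_mul,
    Nat.cast_ofNat]
  field_simp

lemma aux_radial_gradient {E : Type*} [NormedAddCommGroup E] [InnerProductSpace ℝ E]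
    [CompleteSpace E] {x : E} (hx : x ≠ 0) {f : ℝ → ℝ} {f' : ℝ}
    (hf : HasDerivAt f f' ‖x‖) :
    HasGradientAt (fun y : E => f ‖y‖) ((f' / ‖x‖) • x) x := by
  have h := hf.comp_hasFDerivAt x (aux_norm_fderiv hx)
  rw [hasGradientAt_iff_hasFDerivAt]
  refine h.congr_fderiv (Eq.symm ?_)
  ext y
  rw [InnerProductSpace.toDual_apply_apply]
  simp only [ContinuousLinearMap.smul_apply, innerSL_apply_apply, smul_eq_mul, real_inner_smul_left]
  ring

lemma aux_energy {κ c : ℝ} (hc : (2:ℝ) < c) {v v' v'' : ℝ → ℝ} (hvpos : ∀ t, 0 < v t)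
    (hv' : ∀ t, HasDerivAt v (v' t) t) (hv'' : ∀ t, HasDerivAt v' (v'' t) t)
    (hode : ∀ t, -v'' t = κ * v t ^ ((c+2)/(c-2)) - ((c-2)/2)^2 * v t) (t : ℝ) :
    (1/2)*(v' t)^2 + κ*((c-2)/(2*c))*(v t)^(2*c/(c-2)) - (1/2)*((c-2)/2)^2*(v t)^2
    = (1/2)*(v' 0)^2 + κ*((c-2)/(2*c))*(v 0)^(2*c/(c-2)) - (1/2)*((c-2)/2)^2*(v 0)^2 := by
  have hc2 : c - 2 ≠ 0 := by linarith
  have hc0 : c ≠ 0 := by linarith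
  set Efun : ℝ → ℝ := fun s =>
    (1/2)*(v' s)^2 + κ*((c-2)/(2*c))*(v s)^(2*c/(c-2)) - (1/2)*((c-2)/2)^2*(v s)^2 with hE
  have key : ∀ s, HasDerivAt Efun 0 s := by
    intro s
    have h1 := ((hv'' s).pow 2).const_mul ((1:ℝ)/2)
    have h2 := ((hv' s).rpow_const
      (p := 2*c/(c-2)) (Or.inl (hvpos s).ne')).const_mul (κ*((c-2)/(2*c)))
    have h3 := ((hv' s).pow 2).const_mul ((1/2)*((c-2)/2)^2)
    have h4 := (h1.add h2).sub h3
    refine h4.congr_deriv (Eq.symm ?_)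
    have hv2 : v'' s = ((c-2)/2)^2 * v s - κ * v s ^ ((c+2)/(c-2)) := by
      have := hode s; linarith
    have hq : 2*c/(c-2) - 1 = (c+2)/(c-2) := by field_simp; ring
    rw [hq, hv2]
    field_simp
    ring
  have hdiff : Differentiable ℝ Efun := fun s => (key s).differentiableAt
  exact is_const_of_deriv_eq_zero hdiff (fun s => (key s).deriv) t 0

lemma aux_scalar {c r w w' κ α q D : ℝ} (hc : (2:ℝ) < c) (hr : 0 < r) (hw : 0 < w)
    (hα : α = (2-c)/2) (hq : q = 2*c/(c-2)) (hD : D = r^(α-1)*(α*w+w')) :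
    r^(c-1) * ((1/q)*(r*κ*(r^α*w)^q)
      + (((c-2)/2)*(r^α*w)*D - (1/2)*r*D^2 + D*(D*r)))
    = (1/2)*w'^2 + κ*((c-2)/(2*c))*w^q - (1/2)*((c-2)/2)^2*w^2 := by
  have hc2 : c - 2 ≠ 0 := by linarith
  have hc0 : c ≠ 0 := by linarith
  have hαq : α * q = -c := by rw [hα, hq]; field_simp; ring
  set A := α*w + w' with hA
  have hP : ∀ a b : ℝ, r^a * r^b = r^(a+b) := fun a b => (Real.rpow_add hr a b).symm
  have e1 : r^(c-1) * (r*κ*(r^α*w)^q) = κ * w^q := by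
    rw [Real.mul_rpow (Real.rpow_nonneg hr.le α) hw.le, ← Real.rpow_mul hr.le, hαq]
    calc r^(c-1) * (r*κ*(r^(-c) * w^q))
        = (r^(c-1) * r^(1:ℝ) * r^(-c)) * (κ * w^q) := by rw [Real.rpow_one]; ring
      _ = κ * w^q := by rw [hP, hP, show c-1+1+-c = 0 by ring, Real.rpow_zero, one_mul]
  have e2 : r^(c-1) * ((r^α*w) * D) = w * A := by
    rw [hD]
    calc r^(c-1) * (r^α*w * (r^(α-1)*A))
        = (r^(c-1) * r^α * r^(α-1)) * (w*A) := by ring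
      _ = w*A := by
          rw [hP, hP, show c-1+α+(α-1) = 0 by rw [hα]; ring, Real.rpow_zero, one_mul]
  have e3 : r^(c-1) * (r * D^2) = A^2 := by
    rw [hD]
    calc r^(c-1) * (r * (r^(α-1)*A)^2)
        = (r^(c-1) * r^(1:ℝ) * (r^(α-1) * r^(α-1))) * A^2 := by rw [Real.rpow_one]; ring
      _ = A^2 := by
          rw [hP, hP, hP, show c-1+1+(α-1+(α-1)) = 0 by rw [hα]; ring,
            Real.rpow_zero, one_mul]
  have expand : r^(c-1) * ((1/q)*(r*κ*(r^α*w)^q)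
      + (((c-2)/2)*(r^α*w)*D - (1/2)*r*D^2 + D*(D*r)))
      = (1/q)*(r^(c-1) * (r*κ*(r^α*w)^q)) + ((c-2)/2)*(r^(c-1)*((r^α*w)*D))
        + (1/2)*(r^(c-1)*(r*D^2)) := by ring
  rw [expand, e1, e2, e3, hA, hα, hq]
  field_simp
  ring

/-- Conservation law for Fowler solutions: the Pohozaev boundary integral on every sphere
`∂B_r` equals `ω_n H`, where `H` is the Hamiltonian energy of the Fowler solution `v` and
`ω_n` is the `(n-1)`-dimensional Hausdorff measure of the unit sphere. -/
theorem stmt_9 (n : ℕ) (hn : 3 ≤ n) (κ : ℝ) (hκ : 0 < κ)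
    (v v' v'' : ℝ → ℝ) (hvpos : ∀ t, 0 < v t)
    (hv' : ∀ t, HasDerivAt v (v' t) t) (hv'' : ∀ t, HasDerivAt v' (v'' t) t)
    (hode : ∀ t, -v'' t = κ * v t ^ (((n : ℝ) + 2) / ((n : ℝ) - 2))
      - (((n : ℝ) - 2) / 2) ^ 2 * v t)
    (H : ℝ)
    (hH : H = (1 / 2) * (v' 0) ^ 2
      + κ * (((n : ℝ) - 2) / (2 * (n : ℝ))) * v 0 ^ (2 * (n : ℝ) / ((n : ℝ) - 2))
      - (1 / 2) * (((n : ℝ) - 2) / 2) ^ 2 * (v 0) ^ 2)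
    (uH : EuclideanSpace ℝ (Fin n) → ℝ)
    (huH : ∀ x : EuclideanSpace ℝ (Fin n),
      uH x = ‖x‖ ^ (((2 : ℝ) - (n : ℝ)) / 2) * v (Real.log ‖x‖)) :
    ∀ r : ℝ, 0 < r →
      (1 / (2 * (n : ℝ) / ((n : ℝ) - 2))) *
          (∫ x in sphere (0 : EuclideanSpace ℝ (Fin n)) r,
            ⟪x, r⁻¹ • x⟫ * κ * uH x ^ (2 * (n : ℝ) / ((n : ℝ) - 2)) ∂μH[(n : ℝ) - 1])
        + (∫ x in sphere (0 : EuclideanSpace ℝ (Fin n)) r,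
            ((((n : ℝ) - 2) / 2) * uH x * ⟪gradient uH x, r⁻¹ • x⟫
              - (1 / 2) * ⟪x, r⁻¹ • x⟫ * ‖gradient uH x‖ ^ 2
              + ⟪gradient uH x, r⁻¹ • x⟫ * ⟪gradient uH x, x⟫) ∂μH[(n : ℝ) - 1])
      = (μH[(n : ℝ) - 1] (sphere (0 : EuclideanSpace ℝ (Fin n)) 1)).toReal * H := by
  intro r hr
  set c : ℝ := (n : ℝ) with hcdef
  have hc : (2:ℝ) < c := by
    have : (3:ℝ) ≤ (n:ℝ) := by exact_mod_cast hn
    linarith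
  have hc2 : c - 2 ≠ 0 := by linarith
  set t : ℝ := Real.log r with htdef
  set α : ℝ := (2 - c)/2 with hαdef
  set q : ℝ := 2*c/(c-2) with hqdef
  set w : ℝ := v t with hwdef
  set w' : ℝ := v' t with hw'def
  set D : ℝ := r^(α-1)*(α*w+w') with hDdef
  -- the radial profile
  set f : ℝ → ℝ := fun s => s ^ α * v (Real.log s) with hfdef
  have hf : HasDerivAt f D r := by
    have h1 : HasDerivAt (fun s : ℝ => s ^ α) (α * r^(α-1)) r :=
      Real.hasDerivAt_rpow_const (Or.inl hr.ne')
    have h2 : HasDerivAt (fun s : ℝ => v (Real.log s)) (v' (Real.log r) * r⁻¹) r :=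
      (hv' (Real.log r)).comp r (Real.hasDerivAt_log hr.ne')
    have h12 := h1.mul h2
    refine h12.congr_deriv (Eq.symm ?_)
    have hri : r ^ α * r⁻¹ = r ^ (α - 1) := by
      rw [← Real.rpow_neg_one r, ← Real.rpow_add hr, ← sub_eq_add_neg]
    calc D = α * r^(α-1) * w + (r^α * r⁻¹) * w' := by rw [hri, hDdef]; ring
      _ = α * r ^ (α-1) * v (Real.log r) + r ^ α * (v' (Real.log r) * r⁻¹) := by
          rw [hwdef, hw'def, htdef]; ring
  have huHf : uH = fun y => f ‖y‖ := funext fun y => huH y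
  -- pointwise values on the sphere
  have hgrad : ∀ x ∈ sphere (0 : EuclideanSpace ℝ (Fin n)) r,
      gradient uH x = (D / r) • x := by
    intro x hx
    have hxn : ‖x‖ = r := mem_sphere_zero_iff_norm.mp hx
    have hx0 : x ≠ 0 := by
      intro h; rw [h, norm_zero] at hxn; exact hr.ne hxn
    have hf' : HasDerivAt f D ‖x‖ := hxn ▸ hf
    have := (aux_radial_gradient hx0 hf').gradient
    rw [← huHf, hxn] at this
    exact this
  have huHval : ∀ x ∈ sphere (0 : EuclideanSpace ℝ (Fin n)) r,
      uH x = r^α * w := by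
    intro x hx
    have hxn : ‖x‖ = r := mem_sphere_zero_iff_norm.mp hx
    rw [huH, hxn, hwdef, htdef]
  -- the two integrals of constants
  have hinner : ∀ x ∈ sphere (0 : EuclideanSpace ℝ (Fin n)) r,
      ⟪x, x⟫ = r^2 := by
    intro x hx
    rw [real_inner_self_eq_norm_sq, mem_sphere_zero_iff_norm.mp hx]
  have hI1 : (∫ x in sphere (0 : EuclideanSpace ℝ (Fin n)) r,
      ⟪x, r⁻¹ • x⟫ * κ * uH x ^ q ∂μH[c - 1])
      = (μH[c-1] (sphere (0 : EuclideanSpace ℝ (Fin n)) r)).toReal * (r*κ*(r^α*w)^q) := by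
    rw [setIntegral_congr_fun (isClosed_sphere.measurableSet)
      (g := fun _ => r*κ*(r^α*w)^q) ?_, setIntegral_const, smul_eq_mul, measureReal_def]
    intro x hx
    dsimp only
    rw [real_inner_smul_right, hinner x hx, huHval x hx]
    field_simp
  have hI2 : (∫ x in sphere (0 : EuclideanSpace ℝ (Fin n)) r,
      (((c - 2) / 2) * uH x * ⟪gradient uH x, r⁻¹ • x⟫
        - (1 / 2) * ⟪x, r⁻¹ • x⟫ * ‖gradient uH x‖ ^ 2
        + ⟪gradient uH x, r⁻¹ • x⟫ * ⟪gradient uH x, x⟫) ∂μH[c - 1])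
      = (μH[c-1] (sphere (0 : EuclideanSpace ℝ (Fin n)) r)).toReal *
        (((c-2)/2)*(r^α*w)*D - (1/2)*r*D^2 + D*(D*r)) := by
    rw [setIntegral_congr_fun (isClosed_sphere.measurableSet)
      (g := fun _ => ((c-2)/2)*(r^α*w)*D - (1/2)*r*D^2 + D*(D*r)) ?_,
      setIntegral_const, smul_eq_mul, measureReal_def]
    intro x hx
    dsimp only
    rw [hgrad x hx, huHval x hx]
    simp only [real_inner_smul_left, real_inner_smul_right, norm_smul, mul_pow,
      Real.norm_eq_abs, sq_abs, hinner x hx, norm_eq_of_mem_sphere,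
      mem_sphere_zero_iff_norm.mp hx]
    field_simp
  -- measure of the sphere of radius r
  have hsph : sphere (0 : EuclideanSpace ℝ (Fin n)) r
      = r • sphere (0 : EuclideanSpace ℝ (Fin n)) 1 := by
    rw [smul_sphere' hr.ne', smul_zero, Real.norm_eq_abs, abs_of_pos hr, mul_one]
  have hM : (μH[c-1] (sphere (0 : EuclideanSpace ℝ (Fin n)) r)).toReal
      = r^(c-1) * (μH[c-1] (sphere (0 : EuclideanSpace ℝ (Fin n)) 1)).toReal := by
    rw [hsph, Measure.hausdorffMeasure_smul₀ (by linarith : (0:ℝ) ≤ c - 1) hr.ne',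
      ENNReal.toReal_smul, NNReal.smul_def, NNReal.coe_rpow, coe_nnnorm,
      Real.norm_eq_abs, abs_of_pos hr, smul_eq_mul]
  rw [hI1, hI2, hM]
  have hfinal : r^(c-1) * ((1/q)*(r*κ*(r^α*w)^q)
      + (((c-2)/2)*(r^α*w)*D - (1/2)*r*D^2 + D*(D*r))) = H := by
    rw [aux_scalar hc hr (hvpos t) hαdef hqdef hDdef, hH]
    have hE := aux_energy hc hvpos hv' hv'' hode t
    linarith [hE]
  calc (1/q) * (r^(c-1) * (μH[c-1] (sphere (0 : EuclideanSpace ℝ (Fin n)) 1)).toReal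
        * (r*κ*(r^α*w)^q))
      + r^(c-1) * (μH[c-1] (sphere (0 : EuclideanSpace ℝ (Fin n)) 1)).toReal *
        (((c-2)/2)*(r^α*w)*D - (1/2)*r*D^2 + D*(D*r))
      = (μH[c-1] (sphere (0 : EuclideanSpace ℝ (Fin n)) 1)).toReal *
        (r^(c-1) * ((1/q)*(r*κ*(r^α*w)^q)
          + (((c-2)/2)*(r^α*w)*D - (1/2)*r*D^2 + D*(D*r)))) := by ring
    _ = _ := by rw [hfinal]
end
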